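/- Let u : ℂ → ℝ be locally Lipschitz and let σ(z) = conj(z) denote reflection in the real axis. Define Pu : ℂ → ℝ by Pu(z) = min{u(z), u(σ(z))} if Im z ≥ 0 and Pu(z) = max{u(z), u(σ(z))} if Im z ≤ 0 (the two formulas agree on the real axis). Then Pu is locally Lipschitz, and for every measurable set D ⊆ ℂ with σ(D) = D one has ∬_D |∇Pu|² dx dy = ∬_D |∇u|² dx dy, where the gradients exist almost everywhere by Rademacher's theorem. (This is the polarization identity for the Dirichlet integral used in the proof of Theorem 3.1.) -/

import Mathlib

open Set MeasureTheory

/-- Dirichlet integral `I(v,Q) = ∬_Q |∇v|² dx dy` (via the a.e.-defined Fréchet derivative). -/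
noncomputable def dirichletEnergy (v : ℂ → ℝ) (Q : Set ℂ) : ℝ :=
  ∫ z in Q, ‖fderiv ℝ v z‖ ^ 2

/-- A function is admissible for the configuration `(Q; E, F)` if it is continuous on the
closure of `Q`, locally Lipschitz in `Q`, equal to `1` on `E` and equal to `0` on `F`. -/
def IsAdmissible (Q E F : Set ℂ) (v : ℂ → ℝ) : Prop :=
  ContinuousOn v (closure Q) ∧
  (∀ z ∈ Q, ∃ K : NNReal, ∃ s ∈ nhds z, LipschitzOnWith K v s) ∧
  (∀ z ∈ E, v z = 1) ∧ (∀ z ∈ F, v z = 0)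

/-- The modulus `M(Q; E, F)`: the infimum of the Dirichlet integral over admissible functions. -/
noncomputable def modulus (Q E F : Set ℂ) : ℝ :=
  sInf {m : ℝ | ∃ v : ℂ → ℝ, IsAdmissible Q E F v ∧ m = dirichletEnergy v Q}

/-- `IsQuad Q a b c d`: the four distinct points `a b c d` (in this cyclic order) form a
positively oriented Jordan polygon (consecutive sides meet only at the shared vertex,
opposite sides are disjoint, the shoelace signed area is positive), and `Q` is the bounded
Jordan domain it encloses. -/
def IsQuad (Q : Set ℂ) (a b c d : ℂ) : Prop :=
  a ≠ b ∧ b ≠ c ∧ c ≠ d ∧ d ≠ a ∧ a ≠ c ∧ b ≠ d ∧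
  segment ℝ a b ∩ segment ℝ b c = {b} ∧
  segment ℝ b c ∩ segment ℝ c d = {c} ∧
  segment ℝ c d ∩ segment ℝ d a = {d} ∧
  segment ℝ d a ∩ segment ℝ a b = {a} ∧
  segment ℝ a b ∩ segment ℝ c d = ∅ ∧
  segment ℝ b c ∩ segment ℝ d a = ∅ ∧
  0 < ((starRingEnd ℂ) a * b + (starRingEnd ℂ) b * c +
        (starRingEnd ℂ) c * d + (starRingEnd ℂ) d * a).im ∧
  IsOpen Q ∧ Bornology.IsBounded Q ∧ IsConnected Q ∧
  frontier Q = segment ℝ a b ∪ segment ℝ b c ∪ segment ℝ c d ∪ segment ℝ d a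

/-- The conformal modulus `M(Q; a, b, c, d)` of a quadrilateral: the modulus of the
configuration with plate `E` the open side `(b,c)` and plate `F` the open side `(d,a)`. -/
noncomputable def quadModulus (Q : Set ℂ) (a b c d : ℂ) : ℝ :=
  modulus Q (openSegment ℝ b c) (openSegment ℝ d a)



section PolarizationAux

open Metric Filter Topology ENNReal

lemma locLip_ae_diff {f : ℂ → ℝ} (hf : LocallyLipschitz f) :
    ∀ᵐ z : ℂ, DifferentiableAt ℝ f z := by
  choose K t ht hlip using hf
  obtain ⟨T, Tcount, hTcover⟩ :=
    TopologicalSpace.countable_cover_nhds (f := fun x => interior (t x))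
      (fun x => interior_mem_nhds.2 (ht x))
  have H : ∀ x : ℂ, ∀ᵐ z : ℂ, z ∈ interior (t x) → DifferentiableAt ℝ f z := by
    intro x
    filter_upwards [((hlip x).mono interior_subset).ae_differentiableWithinAt_of_mem]
      with z hz hzmem
    exact (hz hzmem).differentiableAt (isOpen_interior.mem_nhds hzmem)
  have H2 : ∀ᵐ z : ℂ, ∀ x ∈ T, z ∈ interior (t x) → DifferentiableAt ℝ f z :=
    (ae_ball_iff Tcount).2 fun x _ => H x
  filter_upwards [H2] with z hz
  have : z ∈ ⋃ x ∈ T, interior (t x) := hTcover ▸ mem_univ z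
  obtain ⟨x, hxT, hzx⟩ := mem_iUnion₂.1 this
  exact hz x hxT hzx

set_option maxHeartbeats 1000000 in
lemma ae_fderiv_zero {h : ℂ → ℝ} (hh : LocallyLipschitz h) {s : Set ℂ}
    (hs : MeasurableSet s) (h0 : ∀ z ∈ s, h z = 0) :
    ∀ᵐ z ∂(volume.restrict s), fderiv ℝ h z = 0 := by
  filter_upwards [ae_restrict_of_ae (locLip_ae_diff hh),
    Besicovitch.ae_tendsto_measure_inter_div volume s, ae_restrict_mem hs]
    with x hd htend hxs
  set L := fderiv ℝ h x with hLdef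
  obtain ⟨K, t0, ht0, hlip0⟩ := hh x
  obtain ⟨r0, r0pos, hball⟩ := Metric.mem_nhds_iff.1 ht0
  have hlip : LipschitzOnWith K h (ball x r0) := hlip0.mono hball
  have main : ∀ ε : ℝ, 0 < ε → ‖L‖ ≤ ε := by
    intro ε εpos
    set c := min (1/2 : ℝ) (ε / (4 * ((K : ℝ) + 1))) with hcdef
    have hKpos : (0:ℝ) < (K:ℝ) + 1 := by positivity
    have hc0 : 0 < c := lt_min (by norm_num) (by positivity)
    have hc12 : c ≤ 1/2 := min_le_left _ _
    have hc1 : c < 1 := lt_of_le_of_lt hc12 (by norm_num)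
    have h1c : (0:ℝ) < 1 - c := by linarith
    have hcK : c ≤ ε / (4 * ((K : ℝ) + 1)) := min_le_right _ _
    have hcK' : c * (4 * ((K : ℝ) + 1)) ≤ ε := by
      rw [← le_div_iff₀ (by positivity)]; exact hcK
    have hKc : (K : ℝ) * c ≤ ε / 2 * (1 - c) := by
      nlinarith [K.coe_nonneg, hc0.le]
    refine ContinuousLinearMap.opNorm_le_bound L εpos.le ?_
    intro y
    rcases eq_or_ne y 0 with rfl | hy
    · simp
    have hyn : (0:ℝ) < ‖y‖ := norm_pos_iff.2 hy
    set w : ℂ := ((1 - c) / ‖y‖) • y with hwdef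
    have hwnorm : ‖w‖ = 1 - c := by
      rw [hwdef, norm_smul, Real.norm_eq_abs, abs_of_nonneg (by positivity),
        div_mul_cancel₀ _ hyn.ne']
    -- eventual facts along 𝓝[>] 0
    have E1 : ∀ᶠ r in 𝓝[>] (0:ℝ), r ∈ Ioo (0:ℝ) r0 :=
      Ioo_mem_nhdsGT_of_mem ⟨le_rfl, r0pos⟩
    have hev : ∀ᶠ z in 𝓝 x, ‖h z - h x - L (z - x)‖ ≤ ε/2 * ‖z - x‖ :=
      (hd.hasFDerivAt.isLittleO).def (by positivity)
    have htendp : Tendsto (fun r : ℝ => x + r • w) (𝓝[>] (0:ℝ)) (𝓝 x) := by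
      have hcont : Continuous fun r : ℝ => x + r • w := by continuity
      have := hcont.tendsto 0
      simp only [zero_smul, add_zero] at this
      exact this.mono_left nhdsWithin_le_nhds
    have E2 := htendp.eventually hev
    have hδlt : (1 : ℝ≥0∞) - ENNReal.ofReal (c^2/2) < 1 :=
      ENNReal.sub_lt_self ENNReal.one_ne_top one_ne_zero
        (by simp [ENNReal.ofReal_pos]; positivity)
    have E3 : ∀ᶠ r in 𝓝[>] (0:ℝ),
        (1 : ℝ≥0∞) - ENNReal.ofReal (c^2/2)
          < volume (s ∩ closedBall x r) / volume (closedBall x r) :=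
      htend.eventually (eventually_gt_nhds hδlt)
    obtain ⟨r, hrIoo, hr2, hr3⟩ := (E1.and (E2.and E3)).exists
    have rpos : 0 < r := hrIoo.1
    have hrr0 : r < r0 := hrIoo.2
    set p : ℂ := x + r • w with hpdef
    have hpx : p - x = r • w := by rw [hpdef, add_sub_cancel_left]
    have hpxnorm : ‖p - x‖ = r * (1 - c) := by
      rw [hpx, norm_smul, Real.norm_eq_abs, abs_of_pos rpos, hwnorm]
    have hpball : p ∈ ball x r0 := by
      rw [mem_ball, dist_eq_norm, hpxnorm]
      have h1 : r * (1 - c) < r := by nlinarith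
      linarith
    -- find a point of s near p
    have hy' : (s ∩ ball p (c*r)).Nonempty := by
      by_contra hcon
      rw [not_nonempty_iff_eq_empty] at hcon
      have hdpx : dist p x = r * (1 - c) := by rw [dist_eq_norm, hpxnorm]
      have hsubset : ball p (c*r) ⊆ closedBall x r \ s := by
        intro z hz
        have hzp : dist z p < c * r := mem_ball.1 hz
        constructor
        · rw [mem_closedBall]
          calc dist z x ≤ dist z p + dist p x := dist_triangle _ _ _
            _ ≤ c*r + r*(1-c) := by linarith
            _ = r := by ring
        · intro hzs
          have : z ∈ s ∩ ball p (c*r) := ⟨hzs, hz⟩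
          rw [hcon] at this; exact this
      set μ := (volume : Measure ℂ)
      have hBm : μ (closedBall x r) = ENNReal.ofReal (r ^ 2) * μ (ball 0 1) := by
        rw [Measure.addHaar_closedBall μ x rpos.le, Complex.finrank_real_complex]
      have hP : μ (ball p (c*r)) = ENNReal.ofReal ((c*r) ^ 2) * μ (ball 0 1) := by
        rw [Measure.addHaar_ball μ p (by positivity), Complex.finrank_real_complex]
      have hv10 : μ (ball (0:ℂ) 1) ≠ 0 := (measure_ball_pos μ _ one_pos).ne'
      have hv1top : μ (ball (0:ℂ) 1) ≠ ⊤ := measure_ball_lt_top.ne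
      have hBm0 : μ (closedBall x r) ≠ 0 := (measure_closedBall_pos μ _ rpos).ne'
      have hBmtop : μ (closedBall x r) ≠ ⊤ := measure_closedBall_lt_top.ne
      have hAtop : μ (s ∩ closedBall x r) ≠ ⊤ :=
        (lt_of_le_of_lt (measure_mono inter_subset_right) measure_closedBall_lt_top).ne
      have key1 : μ (s ∩ closedBall x r) + μ (ball p (c*r)) ≤ μ (closedBall x r) := by
        have e1 : μ (s ∩ closedBall x r) = μ (closedBall x r ∩ s) := by rw [inter_comm]
        calc μ (s ∩ closedBall x r) + μ (ball p (c*r))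
            ≤ μ (closedBall x r ∩ s) + μ (closedBall x r \ s) :=
              add_le_add e1.le (measure_mono hsubset)
          _ = μ (closedBall x r) := measure_inter_add_diff _ hs
      -- convert to reals
      have hv1rpos : 0 < (μ (ball (0:ℂ) 1)).toReal := ENNReal.toReal_pos hv10 hv1top
      have hbb : (μ (closedBall x r)).toReal = r^2 * (μ (ball (0:ℂ) 1)).toReal := by
        rw [hBm, ENNReal.toReal_mul, ENNReal.toReal_ofReal (by positivity)]
      have hpp : (μ (ball p (c*r))).toReal = (c*r)^2 * (μ (ball (0:ℂ) 1)).toReal := by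
        rw [hP, ENNReal.toReal_mul, ENNReal.toReal_ofReal (by positivity)]
      have hsum : (μ (s ∩ closedBall x r)).toReal + (μ (ball p (c*r))).toReal
          ≤ (μ (closedBall x r)).toReal := by
        rw [← ENNReal.toReal_add hAtop measure_ball_lt_top.ne]
        exact ENNReal.toReal_mono hBmtop key1
      have hbbpos : 0 < (μ (closedBall x r)).toReal := ENNReal.toReal_pos hBm0 hBmtop
      have hδ : (1:ℝ≥0∞) - ENNReal.ofReal (c^2/2) = ENNReal.ofReal (1 - c^2/2) := by
        rw [ENNReal.ofReal_sub _ (by positivity), ENNReal.ofReal_one]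
      have hfin : μ (s ∩ closedBall x r) / μ (closedBall x r) ≠ ⊤ :=
        (ENNReal.div_lt_top hAtop hBm0).ne
      have hr3' : 1 - c^2/2
          < (μ (s ∩ closedBall x r)).toReal / (μ (closedBall x r)).toReal := by
        have := (ENNReal.toReal_lt_toReal (by simp [hδ]) hfin).2 (hδ ▸ hr3)
        rwa [ENNReal.toReal_ofReal (by nlinarith), ENNReal.toReal_div] at this
      have ha : (1 - c^2/2) * (μ (closedBall x r)).toReal
          < (μ (s ∩ closedBall x r)).toReal := (lt_div_iff₀ hbbpos).1 hr3'
      nlinarith [mul_pos (mul_pos (pow_pos hc0 2) (pow_pos rpos 2)) hv1rpos]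
    obtain ⟨y', hy's, hy'ball⟩ := hy'
    have hd1 : dist y' p < c*r := mem_ball.1 hy'ball
    have hd2 : dist p x = r*(1-c) := by rw [dist_eq_norm, hpxnorm]
    have hy'r0 : y' ∈ ball x r0 := by
      rw [mem_ball]
      have h3 : dist y' x ≤ dist y' p + dist p x := dist_triangle _ _ _
      have h4 : c*r + r*(1-c) = r := by ring
      linarith
    have hhp : |h p| ≤ (K:ℝ) * (c*r) := by
      have h0y : h y' = 0 := h0 y' hy's
      have := hlip.dist_le_mul p hpball y' hy'r0
      rw [Real.dist_eq, h0y, sub_zero] at this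
      have hd3 : dist p y' ≤ c*r := by rw [dist_comm]; exact hd1.le
      calc |h p| ≤ (K:ℝ) * dist p y' := this
        _ ≤ (K:ℝ) * (c*r) := mul_le_mul_of_nonneg_left hd3 K.coe_nonneg
    have hhx : h x = 0 := h0 x hxs
    have hLpx : ‖L (p - x)‖ ≤ ε/2 * (r * (1-c)) + (K:ℝ) * (c*r) := by
      have h1 : ‖h p - h x - L (p - x)‖ ≤ ε/2 * ‖p - x‖ := hr2
      calc ‖L (p - x)‖ = ‖(h p - h x) - (h p - h x - L (p - x))‖ := by ring_nf
        _ ≤ ‖h p - h x‖ + ‖h p - h x - L (p - x)‖ := norm_sub_le _ _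
        _ ≤ (K:ℝ) * (c*r) + ε/2 * ‖p - x‖ :=
            add_le_add (by rw [hhx, sub_zero, Real.norm_eq_abs]; exact hhp) h1
        _ = ε/2 * (r * (1-c)) + (K:ℝ) * (c*r) := by rw [hpxnorm]; ring
    have hLval : ‖L (p - x)‖ = r * (1 - c) / ‖y‖ * ‖L y‖ := by
      rw [hpx, hwdef, smul_smul, L.map_smul, norm_smul, Real.norm_eq_abs,
        abs_of_nonneg (by positivity)]
      ring
    have hfinal : r * (1 - c) / ‖y‖ * ‖L y‖ ≤ ε * (r * (1-c)) := by
      rw [← hLval]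
      calc ‖L (p - x)‖ ≤ ε/2 * (r * (1-c)) + (K:ℝ) * (c*r) := hLpx
        _ ≤ ε/2 * (r * (1-c)) + ε/2 * (1-c) * r := by nlinarith
        _ = ε * (r * (1-c)) := by ring
    have hrc : 0 < r * (1 - c) := by positivity
    rw [div_mul_eq_mul_div, div_le_iff₀ hyn] at hfinal
    have h2 : (r*(1-c)) * ‖L y‖ ≤ (r*(1-c)) * (ε*‖y‖) := by nlinarith
    exact le_of_mul_le_mul_left h2 hrc
  have : ‖L‖ ≤ 0 := le_of_forall_pos_le_add (fun ε hε => by simpa using main ε hε)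
  exact norm_le_zero_iff.1 this

lemma locLip_sub {f g : ℂ → ℝ} (hf : LocallyLipschitz f) (hg : LocallyLipschitz g) :
    LocallyLipschitz (fun z => f z - g z) := by
  intro x
  obtain ⟨K1, t1, ht1, h1⟩ := hf x
  obtain ⟨K2, t2, ht2, h2⟩ := hg x
  refine ⟨K1 + K2, t1 ∩ t2, inter_mem ht1 ht2, ?_⟩
  apply LipschitzOnWith.of_dist_le_mul
  intro z1 hz1 z2 hz2
  calc dist (f z1 - g z1) (f z2 - g z2) ≤ dist (f z1) (f z2) + dist (g z1) (g z2) :=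
        dist_sub_sub_le _ _ _ _
    _ ≤ (K1:ℝ) * dist z1 z2 + (K2:ℝ) * dist z1 z2 :=
        add_le_add (h1.dist_le_mul _ hz1.1 _ hz2.1) (h2.dist_le_mul _ hz1.2 _ hz2.2)
    _ = ((K1 + K2 : NNReal) : ℝ) * dist z1 z2 := by push_cast; ring

lemma ae_fderiv_eq_on {f g : ℂ → ℝ} (hf : LocallyLipschitz f) (hg : LocallyLipschitz g)
    {s : Set ℂ} (hs : MeasurableSet s) (heq : ∀ z ∈ s, f z = g z) :
    ∀ᵐ z ∂(volume.restrict s), fderiv ℝ f z = fderiv ℝ g z := by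
  have hsub := locLip_sub hf hg
  have h0 : ∀ z ∈ s, (fun z => f z - g z) z = 0 := fun z hz => sub_eq_zero.2 (heq z hz)
  filter_upwards [ae_fderiv_zero hsub hs h0, ae_restrict_of_ae (locLip_ae_diff hf),
    ae_restrict_of_ae (locLip_ae_diff hg)] with z hz hdf hdg
  have : fderiv ℝ (fun z => f z - g z) z = fderiv ℝ f z - fderiv ℝ g z :=
    fderiv_sub hdf hdg
  rw [this] at hz
  exact sub_eq_zero.1 hz

lemma norm_comp_conjCLE (L : ℂ →L[ℝ] ℝ) :
    ‖L.comp (Complex.conjCLE.toContinuousLinearMap : ℂ →L[ℝ] ℂ)‖ = ‖L‖ := by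
  refine le_antisymm ?_ ?_
  · refine ContinuousLinearMap.opNorm_le_bound _ (norm_nonneg L) fun w => ?_
    calc ‖(L.comp (Complex.conjCLE.toContinuousLinearMap : ℂ →L[ℝ] ℂ)) w‖
        = ‖L ((starRingEnd ℂ) w)‖ := by
          simp [ContinuousLinearMap.comp_apply, Complex.conjCLE_apply]
      _ ≤ ‖L‖ * ‖(starRingEnd ℂ) w‖ := ContinuousLinearMap.le_opNorm _ _
      _ = ‖L‖ * ‖w‖ := by rw [RCLike.norm_conj]
  refine ContinuousLinearMap.opNorm_le_bound _ (by positivity) fun w => ?_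
  have : L w = (L.comp (Complex.conjCLE.toContinuousLinearMap : ℂ →L[ℝ] ℂ))
      ((starRingEnd ℂ) w) := by
    simp [ContinuousLinearMap.comp_apply, Complex.conjCLE_apply, Complex.conj_conj]
  rw [this]
  calc ‖_‖ ≤ ‖L.comp (Complex.conjCLE.toContinuousLinearMap : ℂ →L[ℝ] ℂ)‖ *
        ‖(starRingEnd ℂ) w‖ := ContinuousLinearMap.le_opNorm _ _
    _ = _ * ‖w‖ := by rw [RCLike.norm_conj]

end PolarizationAux

open Metric Filter Topology ENNReal in

/-- The polarization identity for the Dirichlet integral: if `u` is locally Lipschitz and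
`Pu z = min (u z) (u (conj z))` for `Im z ≥ 0`, `Pu z = max (u z) (u (conj z))` for
`Im z ≤ 0`, then `Pu` is locally Lipschitz and has the same Dirichlet integral as `u` over
every measurable set symmetric with respect to the real axis. -/
theorem polarization_dirichlet_eq (u Pu : ℂ → ℝ) (hu : LocallyLipschitz u)
    (hPu : ∀ z : ℂ, Pu z =
      if 0 ≤ z.im then min (u z) (u ((starRingEnd ℂ) z))
      else max (u z) (u ((starRingEnd ℂ) z))) :
    LocallyLipschitz Pu ∧
    ∀ D : Set ℂ, MeasurableSet D → (starRingEnd ℂ) '' D = D →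
      ∫ z in D, ‖fderiv ℝ Pu z‖ ^ 2 = ∫ z in D, ‖fderiv ℝ u z‖ ^ 2 := by
  set v : ℂ → ℝ := fun z => u ((starRingEnd ℂ) z) with hvdef
  have hconjlip : LipschitzWith 1 (fun z : ℂ => (starRingEnd ℂ) z) := by
    have h := Complex.conjLIE.isometry.lipschitz
    exact h
  have hv : LocallyLipschitz v := hu.comp hconjlip.locallyLipschitz
  have huv_axis : ∀ z : ℂ, z.im = 0 → u z = v z := by
    intro z hz
    have : (starRingEnd ℂ) z = z := Complex.conj_eq_iff_im.2 hz
    rw [hvdef]; simp only [this]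
  have Pmin : ∀ z : ℂ, 0 ≤ z.im → Pu z = min (u z) (v z) := fun z hz => by
    rw [hPu z, if_pos hz]
  have Pmax : ∀ z : ℂ, z.im ≤ 0 → Pu z = max (u z) (v z) := by
    intro z hz
    by_cases h : 0 ≤ z.im
    · have h0 : z.im = 0 := le_antisymm hz h
      have he := huv_axis z h0
      rw [hPu z, if_pos h]
      show min (u z) (v z) = max (u z) (v z)
      rw [← he, min_self, max_self]
    · rw [hPu z, if_neg h]
  -- local Lipschitz property
  have key : ∀ (Kr : NNReal) (ss : Set ℂ), Convex ℝ ss → LipschitzOnWith Kr u ss →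
      LipschitzOnWith Kr v ss → LipschitzOnWith Kr Pu ss := by
    intro Kr ss hconv hKu hKv
    have hmin : ∀ z1 ∈ ss, ∀ z2 ∈ ss, 0 ≤ z1.im → 0 ≤ z2.im →
        dist (Pu z1) (Pu z2) ≤ (Kr:ℝ) * dist z1 z2 := by
      intro z1 h1 z2 h2 hi1 hi2
      rw [Pmin z1 hi1, Pmin z2 hi2, Real.dist_eq]
      refine le_trans (abs_min_sub_min_le_max _ _ _ _) (max_le ?_ ?_)
      · rw [← Real.dist_eq]; exact hKu.dist_le_mul _ h1 _ h2
      · rw [← Real.dist_eq]; exact hKv.dist_le_mul _ h1 _ h2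
    have hmax : ∀ z1 ∈ ss, ∀ z2 ∈ ss, z1.im ≤ 0 → z2.im ≤ 0 →
        dist (Pu z1) (Pu z2) ≤ (Kr:ℝ) * dist z1 z2 := by
      intro z1 h1 z2 h2 hi1 hi2
      rw [Pmax z1 hi1, Pmax z2 hi2, Real.dist_eq]
      refine le_trans (abs_max_sub_max_le_max _ _ _ _) (max_le ?_ ?_)
      · rw [← Real.dist_eq]; exact hKu.dist_le_mul _ h1 _ h2
      · rw [← Real.dist_eq]; exact hKv.dist_le_mul _ h1 _ h2
    have hmix : ∀ z1 ∈ ss, ∀ z2 ∈ ss, 0 ≤ z1.im → z2.im ≤ 0 →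
        dist (Pu z1) (Pu z2) ≤ (Kr:ℝ) * dist z1 z2 := by
      intro z1 h1 z2 h2 hi1 hi2
      by_cases h0 : 0 ≤ z2.im
      · exact hmin z1 h1 z2 h2 hi1 h0
      push_neg at h0
      have hdpos : 0 < z1.im - z2.im := by linarith
      set t := z1.im / (z1.im - z2.im) with htdef
      have ht0 : 0 ≤ t := div_nonneg hi1 hdpos.le
      have ht1 : t ≤ 1 := by rw [htdef, div_le_one hdpos]; linarith
      set w := (1 - t) • z1 + t • z2 with hw
      have hwss : w ∈ ss := hconv h1 h2 (by linarith) ht0 (by ring)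
      have hwim : w.im = 0 := by
        rw [hw]
        simp only [Complex.add_im, Complex.smul_im, smul_eq_mul]
        rw [htdef]
        field_simp
        ring
      have hw1 : z1 - w = t • (z1 - z2) := by rw [hw]; module
      have hw2 : w - z2 = (1 - t) • (z1 - z2) := by rw [hw]; module
      have hwz1 : dist z1 w = t * dist z1 z2 := by
        rw [dist_eq_norm, hw1, norm_smul, Real.norm_eq_abs, abs_of_nonneg ht0, dist_eq_norm]
      have hwz2 : dist w z2 = (1 - t) * dist z1 z2 := by
        rw [dist_eq_norm, hw2, norm_smul, Real.norm_eq_abs, abs_of_nonneg (by linarith),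
          dist_eq_norm]
      calc dist (Pu z1) (Pu z2) ≤ dist (Pu z1) (Pu w) + dist (Pu w) (Pu z2) :=
            dist_triangle _ _ _
        _ ≤ (Kr:ℝ) * dist z1 w + (Kr:ℝ) * dist w z2 :=
            add_le_add (hmin z1 h1 w hwss hi1 hwim.ge) (hmax w hwss z2 h2 hwim.le hi2)
        _ = (Kr:ℝ) * dist z1 z2 := by rw [hwz1, hwz2]; ring
    apply LipschitzOnWith.of_dist_le_mul
    intro z1 h1 z2 h2
    rcases le_or_gt 0 z1.im with hi1 | hi1 <;> rcases le_or_gt 0 z2.im with hi2 | hi2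
    · exact hmin z1 h1 z2 h2 hi1 hi2
    · exact hmix z1 h1 z2 h2 hi1 hi2.le
    · rw [dist_comm (Pu z1), dist_comm z1]; exact hmix z2 h2 z1 h1 hi2 hi1.le
    · exact hmax z1 h1 z2 h2 hi1.le hi2.le
  have hPuLip : LocallyLipschitz Pu := by
    intro x
    obtain ⟨K1, t1, ht1, h1⟩ := hu x
    obtain ⟨K2, t2, ht2, h2⟩ := hu ((starRingEnd ℂ) x)
    have hpre : (fun z : ℂ => (starRingEnd ℂ) z) ⁻¹' t2 ∈ 𝓝 x :=
      hconjlip.continuous.continuousAt.preimage_mem_nhds ht2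
    obtain ⟨r, rpos, hball⟩ := Metric.mem_nhds_iff.1 (inter_mem ht1 hpre)
    refine ⟨max K1 K2, ball x r, ball_mem_nhds x rpos, ?_⟩
    have weaken : ∀ {K K' : NNReal} {f : ℂ → ℝ} {s : Set ℂ},
        LipschitzOnWith K f s → K ≤ K' → LipschitzOnWith K' f s := by
      intro K K' f s h hK x hx y hy
      exact le_trans (h hx hy) (mul_le_mul_left (ENNReal.coe_le_coe.2 hK) _)
    have hKu : LipschitzOnWith (max K1 K2) u (ball x r) :=
      weaken (h1.mono (fun z hz => (hball hz).1)) (le_max_left _ _)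
    have hKv : LipschitzOnWith (max K1 K2) v (ball x r) := by
      have hmap : MapsTo (fun z : ℂ => (starRingEnd ℂ) z) (ball x r) t2 :=
        fun z hz => (hball hz).2
      have h3 := h2.comp (hconjlip.lipschitzOnWith (s := ball x r)) hmap
      have h4 : LipschitzOnWith K2 v (ball x r) := by
        rw [mul_one] at h3; exact h3
      exact weaken h4 (le_max_right _ _)
    exact key _ _ (convex_ball x r) hKu hKv
  refine ⟨hPuLip, fun D hD hDsym => ?_⟩
  -- the symmetric decomposition
  set A := ({z : ℂ | 0 ≤ z.im ∧ u z ≤ v z} ∪ {z : ℂ | z.im ≤ 0 ∧ v z ≤ u z}) with hA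
  have hucont : Continuous u := hu.continuous
  have hvcont : Continuous v := hv.continuous
  have hAclosed : IsClosed A := by
    rw [hA]
    exact ((isClosed_le continuous_const Complex.continuous_im).inter
        (isClosed_le hucont hvcont)).union
      ((isClosed_le Complex.continuous_im continuous_const).inter
        (isClosed_le hvcont hucont))
  have hAm : MeasurableSet A := hAclosed.measurableSet
  have hPuA : ∀ z ∈ A, Pu z = u z := by
    rintro z (⟨hz1, hz2⟩ | ⟨hz1, hz2⟩)
    · rw [Pmin z hz1]; exact min_eq_left hz2
    · rw [Pmax z hz1]; exact max_eq_left hz2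
  have hPuAc : ∀ z ∈ Aᶜ, Pu z = v z := by
    intro z hz
    rw [hA, compl_union, mem_inter_iff, mem_compl_iff, mem_compl_iff,
      mem_setOf_eq, mem_setOf_eq] at hz
    obtain ⟨hz1, hz2⟩ := hz
    by_cases h : 0 ≤ z.im
    · have h2 : ¬ u z ≤ v z := fun hc => hz1 ⟨h, hc⟩
      rw [Pmin z h]; exact min_eq_right (not_le.1 h2).le
    · have h' : z.im ≤ 0 := (not_le.1 h).le
      have h2 : ¬ v z ≤ u z := fun hc => hz2 ⟨h', hc⟩
      rw [Pmax z h']; exact max_eq_right (not_le.1 h2).le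
  have hvconj : ∀ z : ℂ, v ((starRingEnd ℂ) z) = u z := by
    intro z; rw [hvdef]; simp
  have hAinv : (starRingEnd ℂ) ⁻¹' A = A := by
    ext z
    simp only [mem_preimage, hA, mem_union, mem_setOf_eq, Complex.conj_im, hvconj]
    constructor
    · rintro (⟨h1, h2⟩ | ⟨h1, h2⟩)
      · exact Or.inr ⟨by linarith, h2⟩
      · exact Or.inl ⟨by linarith, h2⟩
    · rintro (⟨h1, h2⟩ | ⟨h1, h2⟩)
      · exact Or.inr ⟨by linarith, h2⟩
      · exact Or.inl ⟨by linarith, h2⟩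
  have hDpre : (starRingEnd ℂ) ⁻¹' D = D := by
    ext z
    simp only [mem_preimage]
    constructor
    · intro hz
      have h1 : (starRingEnd ℂ) ((starRingEnd ℂ) z) ∈ (starRingEnd ℂ) '' D :=
        ⟨(starRingEnd ℂ) z, hz, rfl⟩
      rwa [hDsym, Complex.conj_conj] at h1
    · intro hz
      have h1 : z ∈ (starRingEnd ℂ) '' D := hDsym.symm ▸ hz
      obtain ⟨w, hw, rfl⟩ := h1
      rwa [Complex.conj_conj]
  -- measure preserving conjugation
  have mp : MeasurePreserving (fun z : ℂ => (starRingEnd ℂ) z) volume volume := by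
    have h := Complex.conjLIE.measurePreserving
    exact h
  have hgmeas : Measurable fun z : ℂ => ENNReal.ofReal (‖fderiv ℝ u z‖^2) :=
    ((measurable_fderiv ℝ u).norm.pow_const 2).ennreal_ofReal
  have hgPmeas : Measurable fun z : ℂ => ENNReal.ofReal (‖fderiv ℝ Pu z‖^2) :=
    ((measurable_fderiv ℝ Pu).norm.pow_const 2).ennreal_ofReal
  have hsplitP := lintegral_inter_add_diff (μ := volume)
    (fun z => ENNReal.ofReal (‖fderiv ℝ Pu z‖^2)) D hAm
  have hsplitu := lintegral_inter_add_diff (μ := volume)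
    (fun z => ENNReal.ofReal (‖fderiv ℝ u z‖^2)) D hAm
  have hP1 : ∫⁻ z in D ∩ A, ENNReal.ofReal (‖fderiv ℝ Pu z‖^2)
      = ∫⁻ z in D ∩ A, ENNReal.ofReal (‖fderiv ℝ u z‖^2) := by
    apply lintegral_congr_ae
    filter_upwards [ae_restrict_of_ae_restrict_of_subset inter_subset_right
      (ae_fderiv_eq_on hPuLip hu hAm hPuA)] with z hz
    rw [hz]
  have hP2a : ∫⁻ z in D \ A, ENNReal.ofReal (‖fderiv ℝ Pu z‖^2)
      = ∫⁻ z in D \ A, ENNReal.ofReal (‖fderiv ℝ v z‖^2) := by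
    apply lintegral_congr_ae
    filter_upwards [ae_restrict_of_ae_restrict_of_subset (fun z hz => hz.2)
      (ae_fderiv_eq_on hPuLip hv hAm.compl hPuAc)] with z hz
    rw [hz]
  have hvnorm : ∀ᵐ z : ℂ, ‖fderiv ℝ v z‖ = ‖fderiv ℝ u ((starRingEnd ℂ) z)‖ := by
    have hN : MeasurableSet {z : ℂ | DifferentiableAt ℝ u z} :=
      measurableSet_of_differentiableAt ℝ u
    have hae := locLip_ae_diff hu
    have hpre : ∀ᵐ z : ℂ, DifferentiableAt ℝ u ((starRingEnd ℂ) z) := by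
      rw [ae_iff] at hae ⊢
      have heq : {z : ℂ | ¬ DifferentiableAt ℝ u ((starRingEnd ℂ) z)} =
          (fun z : ℂ => (starRingEnd ℂ) z) ⁻¹' ({z : ℂ | DifferentiableAt ℝ u z}ᶜ) := rfl
      rw [heq, mp.measure_preimage hN.compl.nullMeasurableSet]
      exact hae
    filter_upwards [hpre] with z hz
    have hdc : HasFDerivAt (fun w : ℂ => (starRingEnd ℂ) w)
        (Complex.conjCLE.toContinuousLinearMap : ℂ →L[ℝ] ℂ) z := by
      have := Complex.conjCLE.hasFDerivAt (x := z)
      exact this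
    have hcomp : HasFDerivAt v
        ((fderiv ℝ u ((starRingEnd ℂ) z)).comp
          (Complex.conjCLE.toContinuousLinearMap : ℂ →L[ℝ] ℂ)) z :=
      HasFDerivAt.comp z hz.hasFDerivAt hdc
    rw [hcomp.fderiv, norm_comp_conjCLE]
  have hP2b : ∫⁻ z in D \ A, ENNReal.ofReal (‖fderiv ℝ v z‖^2)
      = ∫⁻ z in D \ A, ENNReal.ofReal (‖fderiv ℝ u ((starRingEnd ℂ) z)‖^2) := by
    apply lintegral_congr_ae
    filter_upwards [ae_restrict_of_ae hvnorm] with z hz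
    rw [hz]
  have hDAinv : (fun z : ℂ => (starRingEnd ℂ) z) ⁻¹' (D \ A) = D \ A := by
    rw [preimage_diff, hDpre, hAinv]
  have mp2 : MeasurePreserving (fun z : ℂ => (starRingEnd ℂ) z)
      (volume.restrict (D \ A)) (volume.restrict (D \ A)) := by
    have h := mp.restrict_preimage (hD.diff hAm)
    rwa [hDAinv] at h
  have hP2c : ∫⁻ z in D \ A, ENNReal.ofReal (‖fderiv ℝ u ((starRingEnd ℂ) z)‖^2)
      = ∫⁻ z in D \ A, ENNReal.ofReal (‖fderiv ℝ u z‖^2) :=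
    mp2.lintegral_comp hgmeas
  have hlin : ∫⁻ z in D, ENNReal.ofReal (‖fderiv ℝ Pu z‖^2)
      = ∫⁻ z in D, ENNReal.ofReal (‖fderiv ℝ u z‖^2) := by
    rw [← hsplitP, hP1, hP2a, hP2b, hP2c, hsplitu]
  rw [integral_eq_lintegral_of_nonneg_ae (ae_of_all _ fun z => by positivity)
      ((measurable_fderiv ℝ Pu).norm.pow_const 2).aestronglyMeasurable,
    integral_eq_lintegral_of_nonneg_ae (ae_of_all _ fun z => by positivity)
      ((measurable_fderiv ℝ u).norm.pow_const 2).aestronglyMeasurable,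
    hlin]
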